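/- For almost every ω, the series Σ_{n=0}^{∞} exp( Σ_{i=0}^{n} Q(θ^{−i} ω) ) is finite. -/

import Mathlib

open Filter MeasureTheory

section Aux

variable {Ω : Type*} [MeasurableSpace Ω] {μ : Measure Ω} [IsProbabilityMeasure μ]
  {T : Ω → Ω} {f : Ω → ℝ}

/-- The running maximum `max (0, S₁, …, S_N)` of Birkhoff sums. -/
noncomputable def maxBS (T : Ω → Ω) (f : Ω → ℝ) : ℕ → Ω → ℝ
  | 0 => fun _ => 0
  | (N + 1) => fun ω => max (maxBS T f N ω) (birkhoffSum T f (N + 1) ω)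

lemma maxBS_nonneg (N : ℕ) (ω : Ω) : 0 ≤ maxBS T f N ω := by
  induction N with
  | zero => exact le_refl 0
  | succ N ih => exact le_trans ih (le_max_left _ _)

lemma maxBS_mono {N N' : ℕ} (h : N ≤ N') (ω : Ω) : maxBS T f N ω ≤ maxBS T f N' ω := by
  induction N' with
  | zero => simpa [Nat.le_zero.mp h] using le_refl (maxBS T f 0 ω)
  | succ N' ih =>
      rcases Nat.lt_or_ge N (N' + 1) with h' | h'
      · exact le_trans (ih (Nat.lt_succ_iff.mp h')) (le_max_left _ _)
      · have : N = N' + 1 := le_antisymm h h'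
        simp [this]

lemma birkhoffSum_le_maxBS {k N : ℕ} (h : k ≤ N) (ω : Ω) :
    birkhoffSum T f k ω ≤ maxBS T f N ω := by
  rcases Nat.eq_zero_or_pos k with rfl | hk
  · simpa [birkhoffSum_zero] using maxBS_nonneg (T := T) (f := f) N ω
  · obtain ⟨m, rfl⟩ := Nat.exists_eq_add_of_lt hk  -- k = 0 + m + 1
    have h1 : birkhoffSum T f (m + 1) ω ≤ maxBS T f (m + 1) ω := by
      simp [maxBS]
    calc birkhoffSum T f (0 + m + 1) ω = birkhoffSum T f (m + 1) ω := by ring_nf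
      _ ≤ maxBS T f (m + 1) ω := h1
      _ ≤ maxBS T f N ω := maxBS_mono (by omega) ω

lemma maxBS_key (N : ℕ) (ω : Ω) :
    maxBS T f N ω ≤ max 0 (f ω + maxBS T f N (T ω)) := by
  induction N with
  | zero => simp [maxBS]
  | succ N ih =>
      refine max_le ?_ ?_
      · exact le_trans ih (max_le_max (le_refl 0)
          (by gcongr; exact maxBS_mono (Nat.le_succ N) _))
      · have : birkhoffSum T f (N + 1) ω = f ω + birkhoffSum T f N (T ω) :=
          birkhoffSum_succ' T f N ω
        rw [this]
        refine le_max_of_le_right ?_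
        gcongr
        exact birkhoffSum_le_maxBS (Nat.le_succ N) _

lemma maxBS_measurable (hT : Measurable T) (hf : Measurable f) (N : ℕ) :
    Measurable (maxBS T f N) := by
  induction N with
  | zero => exact measurable_const
  | succ N ih =>
      exact ih.max <| Finset.measurable_sum _ fun i _ => hf.comp (hT.iterate i)

lemma birkhoffSum_integrable (hT : MeasurePreserving T μ μ) (hf : Measurable f)
    (hfi : Integrable f μ) (n : ℕ) : Integrable (birkhoffSum T f n) μ := by
  refine integrable_finset_sum _ fun i _ => ?_
  exact ((hT.iterate i).integrable_comp hfi.aestronglyMeasurable).mpr hfi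

lemma maxBS_integrable (hT : MeasurePreserving T μ μ) (hf : Measurable f)
    (hfi : Integrable f μ) (N : ℕ) : Integrable (maxBS T f N) μ := by
  induction N with
  | zero => exact integrable_const 0
  | succ N ih =>
      have h := ih.sup (birkhoffSum_integrable hT hf hfi (N + 1))
      exact h.congr (Filter.EventuallyEq.of_eq rfl)

/-- Garsia's maximal ergodic inequality. -/
lemma maximal_ergodic (hT : MeasurePreserving T μ μ) (hf : Measurable f)
    (hfi : Integrable f μ) (N : ℕ) :
    0 ≤ ∫ ω in {ω | 0 < maxBS T f N ω}, f ω ∂μ := by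
  set M := maxBS T f N with hM
  set E := {ω | 0 < M ω} with hE
  have hMm : Measurable M := maxBS_measurable hT.measurable hf N
  have hEm : MeasurableSet E := measurableSet_lt measurable_const hMm
  have hMi : Integrable M μ := maxBS_integrable hT hf hfi N
  have hMTi : Integrable (fun ω => M (T ω)) μ :=
    (hT.integrable_comp hMi.aestronglyMeasurable).mpr hMi
  -- pointwise bound on E
  have key : ∀ ω ∈ E, M ω - M (T ω) ≤ f ω := by
    intro ω hω
    have h := maxBS_key (T := T) (f := f) N ω
    rcases max_cases 0 (f ω + maxBS T f N (T ω)) with ⟨h1, _⟩ | ⟨h1, _⟩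
    · exact absurd (h.trans_eq h1) (not_le.mpr hω)
    · rw [h1] at h; linarith
  -- integral of M - M∘T over E dominates integral over Ω
  have h1 : ∫ ω in E, (M ω - M (T ω)) ∂μ ≤ ∫ ω in E, f ω ∂μ :=
    setIntegral_mono_on (hMi.sub hMTi).integrableOn hfi.integrableOn hEm key
  have h2 : ∫ ω in Eᶜ, (M ω - M (T ω)) ∂μ ≤ 0 := by
    refine setIntegral_nonpos hEm.compl fun ω hω => ?_
    have h0 : M ω = 0 := le_antisymm (not_lt.mp hω) (maxBS_nonneg N ω)
    have := maxBS_nonneg (T := T) (f := f) N (T ω)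
    rw [h0]; linarith
  have h3 : ∫ ω, (M ω - M (T ω)) ∂μ = 0 := by
    rw [integral_sub hMi hMTi]
    have : ∫ ω, M (T ω) ∂μ = ∫ ω, M ω ∂μ := by
      calc ∫ ω, M (T ω) ∂μ = ∫ ω, M ω ∂(Measure.map T μ) :=
            (integral_map hT.measurable.aemeasurable
              (by rw [hT.map_eq]; exact hMi.aestronglyMeasurable)).symm
        _ = ∫ ω, M ω ∂μ := by rw [hT.map_eq]
    rw [this, sub_self]
  have h4 : ∫ ω in E, (M ω - M (T ω)) ∂μ + ∫ ω in Eᶜ, (M ω - M (T ω)) ∂μ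
      = ∫ ω, (M ω - M (T ω)) ∂μ := integral_add_compl hEm (hMi.sub hMTi)
  linarith

end Aux

/-- Let `(Ω, F, P)` be a probability space and `θ` an invertible
measurable transformation (with measurable inverse `θinv`) such that both `θ` and
`θ⁻¹` are measure-preserving and `θ` is ergodic.  If `Q` is integrable with `E[Q] < 0`,
then for almost every `ω` the series `∑_{n=0}^{∞} exp(∑_{i=0}^{n} Q(θ^{−i} ω))`
is finite (i.e. summable). -/
theorem statement4
    {Ω : Type*} [MeasurableSpace Ω] {μ : Measure Ω} [IsProbabilityMeasure μ]
    {θ θinv : Ω → Ω}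
    (hinv₁ : Function.LeftInverse θinv θ) (hinv₂ : Function.RightInverse θinv θ)
    (hθ : Ergodic θ μ) (hθinv : MeasurePreserving θinv μ μ)
    {Q : Ω → ℝ} (hQ : Integrable Q μ) (hQneg : ∫ ω, Q ω ∂μ < 0) :
    ∀ᵐ ω ∂μ,
      Summable (fun n : ℕ => Real.exp (∑ i ∈ Finset.range (n + 1), Q (θinv^[i] ω))) := by
  classical
  set T := θinv
  -- measurable representative of Q
  set Q' := hQ.aestronglyMeasurable.mk Q with hQ'def
  have hQ'meas : Measurable Q' := hQ.aestronglyMeasurable.measurable_mk.mono le_rfl le_rfl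
  have hQQ' : Q =ᵐ[μ] Q' := hQ.aestronglyMeasurable.ae_eq_mk
  have hQ'i : Integrable Q' μ := hQ.congr hQQ'
  have hQ'int : ∫ ω, Q' ω ∂μ = ∫ ω, Q ω ∂μ := integral_congr_ae hQQ'.symm
  set ε : ℝ := -(∫ ω, Q ω ∂μ) / 2 with hεdef
  have hε : 0 < ε := by rw [hεdef]; linarith
  set g : Ω → ℝ := fun ω => Q' ω + ε with hgdef
  have hgmeas : Measurable g := hQ'meas.add measurable_const
  have hgi : Integrable g μ := hQ'i.add (integrable_const ε)
  have hgint : ∫ ω, g ω ∂μ < 0 := by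
    rw [hgdef]
    simp only
    rw [integral_add hQ'i (integrable_const ε), integral_const]
    simp only [measure_univ, probReal_univ, ENNReal.toReal_one, one_smul, smul_eq_mul, one_mul]
    rw [hQ'int]
    linarith
  -- the set where Birkhoff sums of g are unbounded above
  set S : ℕ → Ω → ℝ := fun n ω => birkhoffSum T g n ω with hSdef
  have hSmeas : ∀ n, Measurable (S n) := fun n =>
    Finset.measurable_sum _ fun i _ => hgmeas.comp (hθinv.measurable.iterate i)
  set A : Set Ω := ⋂ m : ℕ, ⋃ n : ℕ, {ω | (m : ℝ) < S n ω} with hAdef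
  have hAmem : ∀ ω, ω ∈ A ↔ ∀ m : ℕ, ∃ n, (m : ℝ) < S n ω := by
    intro ω
    simp [hAdef, Set.mem_iInter, Set.mem_iUnion]
  have hAmeas : MeasurableSet A := by
    refine MeasurableSet.iInter fun m => MeasurableSet.iUnion fun n => ?_
    exact measurableSet_lt measurable_const (hSmeas n)
  have hAiff : ∀ ω, ω ∈ A ↔ ∀ c : ℝ, ∃ n, c < S n ω := by
    intro ω
    rw [hAmem]
    constructor
    · intro h c
      obtain ⟨m, hm⟩ := exists_nat_gt c
      obtain ⟨n, hn⟩ := h m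
      exact ⟨n, hm.trans hn⟩
    · intro h m; exact h m

  have hArec : ∀ ω, ω ∈ A ↔ T ω ∈ A := by
    intro ω
    rw [hAiff, hAiff]
    constructor
    · intro h c
      obtain ⟨n, hn⟩ := h (c + g ω)
      rcases Nat.eq_zero_or_pos n with rfl | hn0
      · obtain ⟨n, hn'⟩ := h ((c + g ω) ⊔ (0 : ℝ))
        rcases Nat.eq_zero_or_pos n with rfl | hn0'
        · simp only [hSdef, birkhoffSum_zero] at hn'
          exact absurd (le_sup_right.trans_lt hn') (lt_irrefl 0)
        · obtain ⟨m, rfl⟩ := Nat.exists_eq_succ_of_ne_zero hn0'.ne'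
          refine ⟨m, ?_⟩
          have : S (m + 1) ω = g ω + S m (T ω) := birkhoffSum_succ' T g m ω
          have h2 : c + g ω < S (m + 1) ω := le_sup_left.trans_lt hn'
          rw [this] at h2; linarith
      · obtain ⟨m, rfl⟩ := Nat.exists_eq_succ_of_ne_zero hn0.ne'
        refine ⟨m, ?_⟩
        have : S (m + 1) ω = g ω + S m (T ω) := birkhoffSum_succ' T g m ω
        rw [this] at hn; linarith
    · intro h c
      obtain ⟨n, hn⟩ := h (c - g ω)
      refine ⟨n + 1, ?_⟩
      have : S (n + 1) ω = g ω + S n (T ω) := birkhoffSum_succ' T g n ω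
      rw [this]; linarith
  have hAinv : θ ⁻¹' A = A := by
    ext ω
    rw [Set.mem_preimage, hArec (θ ω), hinv₁ ω]
  -- ergodicity: A is null or co-null
  rcases hθ.ae_empty_or_univ hAmeas hAinv with hA0 | hA1
  swap
  · -- derive a contradiction from the maximal ergodic inequality
    exfalso
    set E : ℕ → Set Ω := fun N => {ω | 0 < maxBS T g N ω} with hEdef
    have hEmeas : ∀ N, MeasurableSet (E N) :=
      fun N => measurableSet_lt measurable_const (maxBS_measurable hθinv.measurable hgmeas N)
    have hEmono : Monotone E := by
      intro N N' h ω hω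
      exact lt_of_lt_of_le hω (maxBS_mono h ω)
    have hsub : A ⊆ ⋃ N, E N := by
      intro ω hω
      obtain ⟨n, hn⟩ := (hAmem ω).mp hω 0
      simp only [Nat.cast_zero] at hn
      refine Set.mem_iUnion.mpr ⟨n, ?_⟩
      exact lt_of_lt_of_le hn (birkhoffSum_le_maxBS le_rfl ω)
    have hU1 : μ (⋃ N, E N)ᶜ = 0 := by
      have hA1' : μ A = 1 := by
        have := measure_congr hA1
        simpa using this
      have : μ Aᶜ = 0 := by
        rw [measure_compl hAmeas (measure_ne_top μ A), hA1']
        simp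
      exact measure_mono_null (Set.compl_subset_compl.mpr hsub) this
    have htend : Tendsto (fun N => ∫ ω in E N, g ω ∂μ) atTop
        (nhds (∫ ω in ⋃ N, E N, g ω ∂μ)) :=
      tendsto_setIntegral_of_monotone hEmeas hEmono hgi.integrableOn
    have hlim : 0 ≤ ∫ ω in ⋃ N, E N, g ω ∂μ :=
      ge_of_tendsto' htend fun N => maximal_ergodic hθinv hgmeas hgi N
    have hfull : μ.restrict (⋃ N, E N) = μ :=
      Measure.restrict_eq_self_of_ae_mem (mem_ae_iff.mpr hU1)
    rw [hfull] at hlim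
    linarith
  -- main case: a.e. ω the sums S n ω are bounded above
  · have hbdd : ∀ᵐ ω ∂μ, ∃ m : ℕ, ∀ n, S n ω ≤ (m : ℝ) := by
      have : ∀ᵐ ω ∂μ, ω ∉ A := by
        have := measure_congr hA0
        simp only [Set.bot_eq_empty, measure_empty] at this
        exact (ae_iff).mpr (by simpa using this)
      filter_upwards [this] with ω hω
      simp only [hAmem, not_forall, not_exists, not_lt] at hω
      exact hω
    -- a.e. Q' agrees with Q along the orbit
    have horb : ∀ᵐ ω ∂μ, ∀ i : ℕ, Q (T^[i] ω) = Q' (T^[i] ω) := by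
      rw [ae_all_iff]
      intro i
      exact (hθinv.iterate i).quasiMeasurePreserving.ae_eq_comp hQQ'
    filter_upwards [hbdd, horb] with ω hω horbω
    obtain ⟨m, hm⟩ := hω
    -- bound: ∑_{i<n+1} Q (T^i ω) ≤ m - (n+1)ε
    have hbound : ∀ n : ℕ, ∑ i ∈ Finset.range (n + 1), Q (T^[i] ω)
        ≤ (m : ℝ) - (n + 1) * ε := by
      intro n
      have h1 := hm (n + 1)
      have h2 : S (n + 1) ω = (∑ i ∈ Finset.range (n + 1), Q' (T^[i] ω)) + (n + 1) * ε := by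
        simp only [hSdef, birkhoffSum, hgdef]
        rw [Finset.sum_add_distrib]
        simp [mul_comm]
      have h3 : ∑ i ∈ Finset.range (n + 1), Q (T^[i] ω)
          = ∑ i ∈ Finset.range (n + 1), Q' (T^[i] ω) :=
        Finset.sum_congr rfl fun i _ => horbω i
      rw [h3]
      rw [h2] at h1
      push_cast at h1 ⊢
      linarith
    -- compare with a geometric series
    have hsum : Summable (fun n : ℕ => Real.exp m * Real.exp (-ε) ^ (n + 1)) := by
      have hgeo : Summable (fun n : ℕ => Real.exp (-ε) ^ n) :=
        summable_geometric_of_lt_one (Real.exp_nonneg _)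
          (Real.exp_lt_one_iff.mpr (by linarith))
      have := (hgeo.mul_left (Real.exp m * Real.exp (-ε)))
      refine this.congr fun n => ?_
      ring
    refine Summable.of_nonneg_of_le (fun n => Real.exp_nonneg _) (fun n => ?_) hsum
    have := hbound n
    calc Real.exp (∑ i ∈ Finset.range (n + 1), Q (T^[i] ω))
        ≤ Real.exp ((m : ℝ) - (n + 1) * ε) := Real.exp_le_exp.mpr this
      _ = Real.exp m * Real.exp (-ε) ^ (n + 1) := by
          rw [← Real.exp_nat_mul, ← Real.exp_add]
          congr 1
          push_cast
          ring
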